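/- For every n ≥ 2, in every neighbour-sum-distinguishing total 2-colouring γ of the complete graph K_n there exists a vertex v with a monochromatic palette, i.e., there is a ∈ {1,2} with γ(v) = a and γ(e) = a for every edge e incident with v; moreover, γ cannot simultaneously contain one vertex with a monochromatic palette of 1's and another vertex with a monochromatic palette of 2's. -/

import Mathlib

open Finset

variable {V : Type*} [Fintype V] [DecidableEq V]

/-- The vertex sum at `v` induced by an edge colouring `γ`:
the sum of the colours of the edges incident with `v`. -/
def vSum (G : SimpleGraph V) [DecidableRel G.Adj] (γ : Sym2 V → ℕ) (v : V) : ℕ :=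
  ∑ u ∈ G.neighborFinset v, γ s(v, u)

/-- `γ` is an edge `k`-colouring: every edge gets a colour in `{1, …, k}`. -/
def IsEdgeKColoring (G : SimpleGraph V) (k : ℕ) (γ : Sym2 V → ℕ) : Prop :=
  ∀ e ∈ G.edgeSet, 1 ≤ γ e ∧ γ e ≤ k

/-- `γ` is a neighbour-sum-distinguishing edge colouring. -/
def NsdEdge (G : SimpleGraph V) [DecidableRel G.Adj] (γ : Sym2 V → ℕ) : Prop :=
  ∀ ⦃u v : V⦄, G.Adj u v → vSum G γ u ≠ vSum G γ v

/-- The number of edges of `G` coloured `i` by `γ`. -/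
def edgeClassCard (G : SimpleGraph V) [DecidableRel G.Adj] (γ : Sym2 V → ℕ) (i : ℕ) : ℕ :=
  (G.edgeFinset.filter fun e => γ e = i).card

/-- `γ` is equitable as an edge `k`-colouring: any two colour classes among
`{1, …, k}` have sizes differing by at most one. -/
def EquitableEdge (G : SimpleGraph V) [DecidableRel G.Adj] (k : ℕ) (γ : Sym2 V → ℕ) : Prop :=
  ∀ i ∈ Finset.Icc 1 k, ∀ j ∈ Finset.Icc 1 k,
    edgeClassCard G γ i ≤ edgeClassCard G γ j + 1

/-- `G` admits an equitable neighbour-sum-distinguishing edge `k`-colouring. -/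
def HasEqNsdEdge (G : SimpleGraph V) [DecidableRel G.Adj] (k : ℕ) : Prop :=
  ∃ γ : Sym2 V → ℕ, IsEdgeKColoring G k γ ∧ NsdEdge G γ ∧ EquitableEdge G k γ

/-- The total vertex sum at `v` induced by a total colouring `(fv, fe)`. -/
def tSum (G : SimpleGraph V) [DecidableRel G.Adj] (fv : V → ℕ) (fe : Sym2 V → ℕ) (v : V) : ℕ :=
  fv v + vSum G fe v

/-- `(fv, fe)` is a total `k`-colouring: each vertex and edge gets a colour in `{1, …, k}`. -/
def IsTotalKColoring (G : SimpleGraph V) (k : ℕ) (fv : V → ℕ) (fe : Sym2 V → ℕ) : Prop :=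
  (∀ v : V, 1 ≤ fv v ∧ fv v ≤ k) ∧ ∀ e ∈ G.edgeSet, 1 ≤ fe e ∧ fe e ≤ k

/-- `(fv, fe)` is a neighbour-sum-distinguishing total colouring. -/
def NsdTotal (G : SimpleGraph V) [DecidableRel G.Adj] (fv : V → ℕ) (fe : Sym2 V → ℕ) : Prop :=
  ∀ ⦃u v : V⦄, G.Adj u v → tSum G fv fe u ≠ tSum G fv fe v

/-- The number of elements (vertices and edges) of `G` coloured `i`. -/
def totalClassCard (G : SimpleGraph V) [DecidableRel G.Adj]
    (fv : V → ℕ) (fe : Sym2 V → ℕ) (i : ℕ) : ℕ :=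
  (Finset.univ.filter fun v => fv v = i).card + edgeClassCard G fe i

/-- `(fv, fe)` is equitable as a total `k`-colouring. -/
def EquitableTotal (G : SimpleGraph V) [DecidableRel G.Adj] (k : ℕ)
    (fv : V → ℕ) (fe : Sym2 V → ℕ) : Prop :=
  ∀ i ∈ Finset.Icc 1 k, ∀ j ∈ Finset.Icc 1 k,
    totalClassCard G fv fe i ≤ totalClassCard G fv fe j + 1

/-- `G` admits an equitable neighbour-sum-distinguishing total `k`-colouring. -/
def HasEqNsdTotal (G : SimpleGraph V) [DecidableRel G.Adj] (k : ℕ) : Prop :=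
  ∃ (fv : V → ℕ) (fe : Sym2 V → ℕ),
    IsTotalKColoring G k fv fe ∧ NsdTotal G fv fe ∧ EquitableTotal G k fv fe

instance {W : Type*} [DecidableEq W] : DecidableRel (SimpleGraph.completeGraph W).Adj := fun a b =>
  inferInstanceAs (Decidable (a ≠ b))

/-- Every nsd total `2`-colouring of `K_n` (`n ≥ 2`) has a vertex with a
monochromatic palette (its own colour and the colours of all its incident edges
are all equal to some `a ∈ {1,2}`); moreover, it cannot contain both a vertex with
a monochromatic palette of `1`'s and a vertex with a monochromatic palette of `2`'s. -/
theorem nsd_total_two_coloring_monochromatic_palette (n : ℕ) (hn : 2 ≤ n)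
    (fv : Fin n → ℕ) (fe : Sym2 (Fin n) → ℕ)
    (hcol : IsTotalKColoring (SimpleGraph.completeGraph (Fin n)) 2 fv fe)
    (hnsd : NsdTotal (SimpleGraph.completeGraph (Fin n)) fv fe) :
    (∃ (v : Fin n) (a : ℕ), (a = 1 ∨ a = 2) ∧ fv v = a ∧
      ∀ u : Fin n, u ≠ v → fe s(v, u) = a) ∧
    ¬ ((∃ v : Fin n, fv v = 1 ∧ ∀ u : Fin n, u ≠ v → fe s(v, u) = 1) ∧
       (∃ w : Fin n, fv w = 2 ∧ ∀ u : Fin n, u ≠ w → fe s(w, u) = 2)) := by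

  set G := SimpleGraph.completeGraph (Fin n) with hG
  have hadj : ∀ u v : Fin n, u ≠ v → G.Adj u v := fun u v h => h
  have hnbr : ∀ v : Fin n, G.neighborFinset v = univ.erase v := by
    intro v
    ext u
    simp [SimpleGraph.mem_neighborFinset, hG, SimpleGraph.completeGraph, Finset.mem_erase, ne_comm]
  have hcard : ∀ v : Fin n, (univ.erase v).card = n - 1 := by
    intro v
    rw [Finset.card_erase_of_mem (Finset.mem_univ v), Finset.card_univ, Fintype.card_fin]
  have hfe : ∀ v u : Fin n, u ≠ v → 1 ≤ fe s(v, u) ∧ fe s(v, u) ≤ 2 := by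
    intro v u h
    exact hcol.2 _ (by simpa [SimpleGraph.mem_edgeSet] using hadj v u h.symm)
  have hsum_lb : ∀ v : Fin n, n - 1 ≤ vSum G fe v := by
    intro v
    rw [vSum, hnbr]
    calc n - 1 = ∑ _u ∈ univ.erase v, 1 := by simp [hcard v]
    _ ≤ ∑ u ∈ univ.erase v, fe s(v, u) :=
        Finset.sum_le_sum fun u hu => (hfe v u (Finset.ne_of_mem_erase hu)).1
  have hsum_ub : ∀ v : Fin n, vSum G fe v ≤ 2 * (n - 1) := by
    intro v
    rw [vSum, hnbr]
    calc ∑ u ∈ univ.erase v, fe s(v, u) ≤ ∑ _u ∈ univ.erase v, 2 :=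
        Finset.sum_le_sum fun u hu => (hfe v u (Finset.ne_of_mem_erase hu)).2
    _ = 2 * (n - 1) := by simp [hcard v, mul_comm]
  have hchar1 : ∀ v : Fin n, tSum G fv fe v = n →
      fv v = 1 ∧ ∀ u : Fin n, u ≠ v → fe s(v, u) = 1 := by
    intro v h
    have h1 := (hcol.1 v).1
    have h2 := hsum_lb v
    rw [tSum] at h
    have hfv : fv v = 1 := by omega
    have hS : vSum G fe v = n - 1 := by omega
    refine ⟨hfv, ?_⟩
    rw [vSum, hnbr] at hS
    have hSs : ∑ _u ∈ univ.erase v, 1 = ∑ u ∈ univ.erase v, fe s(v, u) := by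
      simp [hS, hcard v]
    have := (Finset.sum_eq_sum_iff_of_le
      (fun u hu => (hfe v u (Finset.ne_of_mem_erase hu)).1)).mp hSs
    intro u hu
    exact (this u (Finset.mem_erase.mpr ⟨hu, Finset.mem_univ u⟩)).symm
  have hchar2 : ∀ v : Fin n, tSum G fv fe v = 2 * n →
      fv v = 2 ∧ ∀ u : Fin n, u ≠ v → fe s(v, u) = 2 := by
    intro v h
    have h1 := (hcol.1 v).2
    have h2 := hsum_ub v
    rw [tSum] at h
    have hfv : fv v = 2 := by omega
    have hS : vSum G fe v = 2 * (n - 1) := by omega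
    refine ⟨hfv, ?_⟩
    rw [vSum, hnbr] at hS
    have hSs : ∑ u ∈ univ.erase v, fe s(v, u) = ∑ _u ∈ univ.erase v, 2 := by
      simp [hS, hcard v, mul_comm]
    have := (Finset.sum_eq_sum_iff_of_le
      (fun u hu => (hfe v u (Finset.ne_of_mem_erase hu)).2)).mp hSs
    intro u hu
    exact this u (Finset.mem_erase.mpr ⟨hu, Finset.mem_univ u⟩)
  have hinj : ∀ u v : Fin n, u ≠ v → tSum G fv fe u ≠ tSum G fv fe v :=
    fun u v h => hnsd (hadj u v h)
  constructor
  · by_contra hno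
    push_neg at hno
    have hne_n : ∀ v : Fin n, tSum G fv fe v ≠ n := by
      intro v hv
      obtain ⟨h1, h2⟩ := hchar1 v hv
      obtain ⟨u, hu, hune⟩ := hno v 1 (Or.inl rfl) h1
      exact hune (h2 u hu)
    have hne_2n : ∀ v : Fin n, tSum G fv fe v ≠ 2 * n := by
      intro v hv
      obtain ⟨h1, h2⟩ := hchar2 v hv
      obtain ⟨u, hu, hune⟩ := hno v 2 (Or.inr rfl) h1
      exact hune (h2 u hu)
    have hmem : ∀ v : Fin n, tSum G fv fe v ∈ Finset.Icc (n + 1) (2 * n - 1) := by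
      intro v
      have h1 := (hcol.1 v).1
      have h2 := (hcol.1 v).2
      have h3 := hsum_lb v
      have h4 := hsum_ub v
      have h5 := hne_n v
      have h6 := hne_2n v
      rw [tSum] at h5 h6 ⊢
      rw [Finset.mem_Icc]
      omega
    have hcardle : (univ : Finset (Fin n)).card ≤ (Finset.Icc (n + 1) (2 * n - 1)).card :=
      Finset.card_le_card_of_injOn (tSum G fv fe) (fun v _ => hmem v)
        (fun a _ b _ hab => by
          by_contra hne
          exact hinj a b hne hab)
    rw [Finset.card_univ, Fintype.card_fin, Nat.card_Icc] at hcardle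
    omega
  · rintro ⟨⟨v, hv1, hv2⟩, ⟨w, hw1, hw2⟩⟩
    have hvw : v ≠ w := by
      intro h
      rw [h] at hv1
      omega
    have e1 := hv2 w (Ne.symm hvw)
    have e2 := hw2 v hvw
    rw [Sym2.eq_swap] at e2
    omega
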